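/- Let k be a positive integer and β, γ > 0 with β ≠ γ. Define the vector field F : ℝ^k → ℝ^k by F₁(y) = β (1 − Σ_{m=1}^{k} y_m)(Σ_{m=1}^{k} y_m) − kγ y₁ and F_m(y) = kγ(y_{m−1} − y_m) for m = 2,…,k. Then F(y) = 0 if and only if y = 0 or y = ((1 − γ/β)/k) 𝟙, where 𝟙 ∈ ℝ^k is the all-ones vector. -/

import Mathlib

/-- Equilibria of the deterministic SIS model with `k` Erlang infectious
stages: the vector field `F` with `F₁(y) = β(1 - Σ y_m)(Σ y_m) - kγ y₁` and
`F_m(y) = kγ(y_{m-1} - y_m)` for `m = 2,…,k` vanishes exactly at the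
disease-free equilibrium `y = 0` and at the endemic equilibrium
`y = ((1 - γ/β)/k) 𝟙`. -/
theorem sis_erlang_deterministic_equilibria
    (k : ℕ) (hk : 0 < k) (β γ : ℝ) (hβ : 0 < β) (hγ : 0 < γ) (hne : β ≠ γ) :
    let F : (Fin k → ℝ) → (Fin k → ℝ) := fun y i =>
      if (i : ℕ) = 0 then
        β * (1 - ∑ m : Fin k, y m) * (∑ m : Fin k, y m) - k * γ * y i
      else
        k * γ * (y ⟨(i : ℕ) - 1, lt_of_le_of_lt (Nat.sub_le _ _) i.isLt⟩ - y i)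
    ∀ y : Fin k → ℝ,
      F y = 0 ↔ (y = 0 ∨ y = fun _ => (1 - γ / β) / k) := by
  intro F y
  have hkR : (0:ℝ) < k := Nat.cast_pos.mpr hk
  constructor
  · intro h
    have h' : ∀ i, F y i = 0 := fun i => congrFun h i
    -- all coordinates equal
    have hconstN : ∀ n (hn : n < k), y ⟨n, hn⟩ = y ⟨0, hk⟩ := by
      intro n
      induction n with
      | zero => intro hn; rfl
      | succ m ih =>
          intro hn
          have hm : m < k := Nat.lt_of_succ_lt hn
          have := h' ⟨m + 1, hn⟩
          simp only [F, Nat.succ_ne_zero, if_false, Nat.add_sub_cancel] at this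
          have hne' : (k:ℝ) * γ ≠ 0 := by positivity
          rcases mul_eq_zero.mp this with h1 | h2
          · exact absurd h1 hne'
          · have := sub_eq_zero.mp h2
            rw [← this, ih hm]
    have hconst : ∀ i : Fin k, y i = y ⟨0, hk⟩ := fun i => hconstN i i.isLt
    set c := y ⟨0, hk⟩ with hc
    have hsum : (∑ m : Fin k, y m) = k * c := by
      rw [Finset.sum_congr rfl fun m _ => hconst m]
      simp [mul_comm]
    have h0 := h' ⟨0, hk⟩
    simp only [F, if_pos rfl] at h0
    rw [hsum, ← hc] at h0
    -- β (1 - k c)(k c) - k γ c = 0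
    have hfac : (k:ℝ) * c * (β * (1 - k * c) - γ) = 0 := by ring_nf; ring_nf at h0; linarith
    rcases mul_eq_zero.mp hfac with h1 | h2
    · rcases mul_eq_zero.mp h1 with hk0 | hc0
      · exact absurd hk0 (ne_of_gt hkR)
      · left; funext i; rw [hconst i]; exact hc0
    · right
      have hc0 : c = (1 - γ / β) / k := by
        have hb : β ≠ 0 := ne_of_gt hβ
        field_simp at h2 ⊢
        ring_nf at h2 ⊢
        linarith
      funext i; rw [hconst i]; exact hc0
  · intro h
    rcases h with h | h
    · subst h
      funext i
      simp only [F, Pi.zero_apply]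
      split <;> simp
    · subst h
      funext i
      have hb : β ≠ 0 := ne_of_gt hβ
      have hk0 : (k:ℝ) ≠ 0 := ne_of_gt hkR
      simp only [F]
      have hsum : (∑ _m : Fin k, (1 - γ / β) / k) = 1 - γ / β := by
        rw [Finset.sum_const, Finset.card_univ, Fintype.card_fin, nsmul_eq_mul]
        field_simp
      split
      · rw [hsum]
        show _ = (0 : Fin k → ℝ) i
        simp only [Pi.zero_apply]
        field_simp
        ring_nf
      · show _ = (0 : Fin k → ℝ) i
        simp
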